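/- arXiv:1305.6791 — 3 statements merged into one kernel-verified Lean document; each statement's English description precedes it below -/
import Mathlib

section
/- Let p > 2 and let α, β, μ, δ, k be real numbers with α, β, μ, δ > 0 satisfying (1/2)α + (1/2)β + (1/4)μ - δ/(p+1) = k and (3/2)α + (5/2)β + (3/2)μ - (p+4)δ/(p+1) = 0. Then k > (α+β)(p-1)/(2(p+4)); in particular k > 0. -/
/-- Step 2 of Lemma 2.6: on the manifold, I(u) = k > (α+β)(p-1)/(2(p+4)) > 0. -/
theorem stmt_1 (p α β μ δ k : ℝ) (hp : 2 < p)
    (hα : 0 < α) (hβ : 0 < β) (hμ : 0 < μ) (hδ : 0 < δ)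
    (h1 : (1/2) * α + (1/2) * β + (1/4) * μ - δ / (p+1) = k)
    (h2 : (3/2) * α + (5/2) * β + (3/2) * μ - (p+4) * δ / (p+1) = 0) :
    (α + β) * (p - 1) / (2 * (p + 4)) < k ∧ 0 < k := by
  have hp1 : (0:ℝ) < p + 1 := by linarith
  have hp4 : (0:ℝ) < p + 4 := by linarith
  have h1' : ((1/2) * α + (1/2) * β + (1/4) * μ) * (p+1) - δ = k * (p+1) := by
    field_simp at h1; linarith
  have h2' : ((3/2) * α + (5/2) * β + (3/2) * μ) * (p+1) = (p+4) * δ := by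
    field_simp at h2; linarith
  have hmain : (α + β) * (p - 1) / (2 * (p + 4)) < k := by
    rw [div_lt_iff₀ (by linarith)]
    nlinarith [mul_pos hα hp1, mul_pos hμ hp1, mul_pos hμ (sub_pos.mpr hp)]
  refine ⟨hmain, lt_trans ?_ hmain⟩
  exact div_pos (mul_pos (by linarith) (by linarith)) (by linarith)
end

section
/- Let 2 < p < 5, k > 0, and λ ∈ ℝ with λ ≠ 0 and λ ≠ (2p-1)/(9p). Define β = -18k(p-5)((p+4)λ-1)/((p-1)(2p-1-9pλ)) and δ = 36k(p+1)(5λ-1)/((p-1)(2p-1-9pλ)). Then it is impossible that both β > 0 and δ > 0. More precisely: δ ≤ 0 whenever λ ≥ 1/5 or λ < (2p-1)/(9p), and β < 0 whenever (2p-1)/(9p) < λ < 1/5. -/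
/-- Case (1) in Step 4 of Lemma 2.6: the solution components β, δ cannot both be
positive. -/
theorem stmt_4 (p k l : ℝ) (hp1 : 2 < p) (hp2 : p < 5) (hk : 0 < k)
    (hl0 : l ≠ 0) (hl1 : l ≠ (2*p - 1) / (9*p))
    (β δ : ℝ)
    (hβ : β = -(18 * k * (p - 5) * ((p+4)*l - 1)) / ((p - 1) * (2*p - 1 - 9*p*l)))
    (hδ : δ = 36 * k * (p+1) * (5*l - 1) / ((p - 1) * (2*p - 1 - 9*p*l))) :
    ¬ (0 < β ∧ 0 < δ) ∧
      ((1/5 ≤ l ∨ l < (2*p - 1) / (9*p)) → δ ≤ 0) ∧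
      ((2*p - 1) / (9*p) < l ∧ l < 1/5 → β < 0) := by
  subst hβ hδ
  have h9p : (0:ℝ) < 9*p := by linarith
  have hthr : (2*p - 1) / (9*p) < 1/5 := by
    rw [div_lt_div_iff₀ h9p (by norm_num)]
    nlinarith
  have hδle : (1/5 ≤ l ∨ l < (2*p - 1) / (9*p)) →
      36 * k * (p+1) * (5*l - 1) / ((p - 1) * (2*p - 1 - 9*p*l)) ≤ 0 := by
    rintro (h | h)
    · have hD : (p - 1) * (2*p - 1 - 9*p*l) < 0 := by
        have h2 : 2*p - 1 - 9*p*l < 0 := by nlinarith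
        exact mul_neg_of_pos_of_neg (by linarith) h2
      have hN : 0 ≤ 36 * k * (p+1) * (5*l - 1) := by
        nlinarith [mul_pos hk (show (0:ℝ) < p+1 by linarith)]
      exact div_nonpos_of_nonneg_of_nonpos hN hD.le
    · have hl5 : l < 1/5 := h.trans hthr
      have h' : l * (9*p) < 2*p - 1 := (lt_div_iff₀ h9p).1 h
      have hD : 0 < (p - 1) * (2*p - 1 - 9*p*l) := by nlinarith
      have hN : 36 * k * (p+1) * (5*l - 1) ≤ 0 := by nlinarith
      exact div_nonpos_of_nonpos_of_nonneg hN hD.le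
  have hβlt : (2*p - 1) / (9*p) < l ∧ l < 1/5 →
      -(18 * k * (p - 5) * ((p+4)*l - 1)) / ((p - 1) * (2*p - 1 - 9*p*l)) < 0 := by
    rintro ⟨h1, h2⟩
    have h' : 2*p - 1 < l * (9*p) := (div_lt_iff₀ h9p).1 h1
    have hD : (p - 1) * (2*p - 1 - 9*p*l) < 0 := by nlinarith
    have hX : 0 < (p+4)*l - 1 := by nlinarith
    have hN : 0 < -(18 * k * (p - 5) * ((p+4)*l - 1)) := by
      nlinarith [mul_pos (mul_pos hk (show (0:ℝ) < 5 - p by linarith)) hX]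
    exact div_neg_of_pos_of_neg hN hD
  refine ⟨?_, hδle, hβlt⟩
  rintro ⟨hb, hd⟩
  rcases lt_trichotomy l ((2*p - 1) / (9*p)) with h | h | h
  · exact absurd (hδle (Or.inr h)) (not_le.2 hd)
  · exact hl1 h
  · rcases lt_or_ge l (1/5) with h5 | h5
    · exact absurd (hβlt ⟨h, h5⟩) (not_lt.2 hb.le)
    · exact absurd (hδle (Or.inl h5)) (not_le.2 hd)
end

section
/- Let A, B, D > 0, a, b > 0, p > 2. Then there exists a unique t̃ > 0 such that (3/2)a t̃² A + (5/2) t̃⁴ B + (3/2) b t̃⁵ A² - ((p+4)/(p+1)) t̃^{p+3} D = 0, and the function γ(t) = (a/2)t³A + (1/2)t⁵B + (b/4)t⁶A² - (1/(p+1))t^{p+4}D attains its maximum over (0,∞) at t̃. -/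
open Real Set Filter Topology

/-- Lemma 2.5 (algebraic core): there is a unique t̃ > 0 with G(u_{t̃}) = 0, and it
maximizes γ(t) = I(u_t) over (0, ∞). -/
theorem stmt_11 (A B D a b p : ℝ) (hA : 0 < A) (hB : 0 < B) (hD : 0 < D)
    (ha : 0 < a) (hb : 0 < b) (hp : 2 < p)
    (γ : ℝ → ℝ)
    (hγ : ∀ t : ℝ, γ t = a / 2 * t ^ 3 * A + 1 / 2 * t ^ 5 * B + b / 4 * t ^ 6 * A ^ 2
        - 1 / (p + 1) * t ^ (p + 4) * D) :
    ∃ t : ℝ, 0 < t ∧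
      (3/2) * a * t ^ 2 * A + (5/2) * t ^ 4 * B + (3/2) * b * t ^ 5 * A ^ 2
        - (p + 4) / (p + 1) * t ^ (p + 3) * D = 0 ∧
      (∀ s : ℝ, 0 < s →
        (3/2) * a * s ^ 2 * A + (5/2) * s ^ 4 * B + (3/2) * b * s ^ 5 * A ^ 2
          - (p + 4) / (p + 1) * s ^ (p + 3) * D = 0 → s = t) ∧
      ∀ s : ℝ, 0 < s → γ s ≤ γ t := by
  have hp1 : (0:ℝ) < p + 1 := by linarith
  have hc1p : (0:ℝ) < 3/2 * a * A := by positivity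
  have hc2p : (0:ℝ) < 5/2 * B := by positivity
  have hc3p : (0:ℝ) < 3/2 * b * A^2 := by positivity
  have hCp : (0:ℝ) < (p+4)/(p+1) * D := mul_pos (div_pos (by linarith) hp1) hD
  set f : ℝ → ℝ := fun t => 3/2 * a * A * t ^ (-(p+1)) + 5/2 * B * t ^ (1-p)
      + 3/2 * b * A^2 * t ^ (2-p) - (p+4)/(p+1) * D with hf
  have hq1 : -(p+1) < 0 := by linarith
  have hq2 : 1 - p < 0 := by linarith
  have hq3 : 2 - p < 0 := by linarith
  -- key identity
  have key : ∀ t : ℝ, 0 < t →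
      (3/2) * a * t ^ 2 * A + (5/2) * t ^ 4 * B + (3/2) * b * t ^ 5 * A ^ 2
        - (p + 4) / (p + 1) * t ^ (p + 3) * D = t ^ (p+3) * f t := by
    intro t ht
    have e1 : t ^ (p+3) * t ^ (-(p+1)) = t ^ (2:ℕ) := by
      rw [← Real.rpow_add ht, ← Real.rpow_natCast t 2]; congr 1; push_cast; ring
    have e2 : t ^ (p+3) * t ^ (1-p) = t ^ (4:ℕ) := by
      rw [← Real.rpow_add ht, ← Real.rpow_natCast t 4]; congr 1; push_cast; ring
    have e3 : t ^ (p+3) * t ^ (2-p) = t ^ (5:ℕ) := by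
      rw [← Real.rpow_add ht, ← Real.rpow_natCast t 5]; congr 1; push_cast; ring
    simp only [hf]
    push_cast at e1 e2 e3 ⊢
    linear_combination (-(3/2 * a * A)) * e1 - (5/2 * B) * e2 - (3/2 * b * A^2) * e3
  -- f is strictly decreasing on (0, ∞)
  have hfanti : StrictAntiOn f (Ioi 0) := by
    intro x hx y hy hxy
    have h1 := Real.rpow_lt_rpow_of_neg hx hxy hq1
    have h2 := Real.rpow_lt_rpow_of_neg hx hxy hq2
    have h3 := Real.rpow_lt_rpow_of_neg hx hxy hq3
    have m1 := mul_lt_mul_of_pos_left h1 hc1p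
    have m2 := mul_lt_mul_of_pos_left h2 hc2p
    have m3 := mul_lt_mul_of_pos_left h3 hc3p
    simp only [hf]
    linarith
  -- f is continuous on (0, ∞)
  have hfc : ContinuousOn f (Ioi 0) := by
    intro x hx
    have hx' : (x:ℝ) ≠ 0 := ne_of_gt hx
    apply ContinuousAt.continuousWithinAt
    have r1 := Real.continuousAt_rpow_const x (-(p+1)) (Or.inl hx')
    have r2 := Real.continuousAt_rpow_const x (1-p) (Or.inl hx')
    have r3 := Real.continuousAt_rpow_const x (2-p) (Or.inl hx')
    simp only [hf]
    exact (((continuousAt_const.mul r1).add (continuousAt_const.mul r2)).add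
      (continuousAt_const.mul r3)).sub continuousAt_const
  -- a small point where f > 0
  set t0 : ℝ := min 1 ((3/2 * a * A) / (2 * ((p+4)/(p+1) * D))) with ht0def
  have ht0pos : 0 < t0 := lt_min one_pos (by positivity)
  have ht0le1 : t0 ≤ 1 := min_le_left _ _
  have hft0 : 0 < f t0 := by
    have h1 : t0 ^ (-1:ℝ) ≤ t0 ^ (-(p+1)) :=
      Real.rpow_le_rpow_of_exponent_ge ht0pos ht0le1 (by linarith)
    have h1' : t0 ^ (-1:ℝ) = 1/t0 := by
      rw [Real.rpow_neg_one]; exact (one_div t0).symm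
    have hle : t0 ≤ (3/2 * a * A) / (2 * ((p+4)/(p+1) * D)) := min_le_right _ _
    have hdiv : 2 * ((p+4)/(p+1) * D) ≤ (3/2 * a * A) / t0 := by
      rw [le_div_iff₀ ht0pos]
      calc 2 * ((p+4)/(p+1) * D) * t0
          ≤ 2 * ((p+4)/(p+1) * D) * ((3/2 * a * A) / (2 * ((p+4)/(p+1) * D))) := by
            apply mul_le_mul_of_nonneg_left hle (by positivity)
        _ = 3/2 * a * A := by field_simp
    have hm1 : (3/2 * a * A) * (t0 ^ (-1:ℝ)) ≤ (3/2 * a * A) * t0 ^ (-(p+1)) :=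
      mul_le_mul_of_nonneg_left h1 hc1p.le
    have hp2 : 0 < 5/2 * B * t0 ^ (1-p) :=
      mul_pos hc2p (Real.rpow_pos_of_pos ht0pos _)
    have hp3 : 0 < 3/2 * b * A^2 * t0 ^ (2-p) :=
      mul_pos hc3p (Real.rpow_pos_of_pos ht0pos _)
    have : (3/2 * a * A) * (t0 ^ (-1:ℝ)) = (3/2 * a * A) / t0 := by
      rw [h1']; ring
    simp only [hf]
    linarith
  -- a large point where f < 0
  have hlim : Tendsto f atTop (𝓝 (3/2 * a * A * 0 + 5/2 * B * 0 + 3/2 * b * A^2 * 0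
      - (p+4)/(p+1) * D)) := by
    have l1 : Tendsto (fun x : ℝ => x ^ (-(p+1))) atTop (𝓝 0) :=
      tendsto_rpow_neg_atTop (by linarith)
    have l2 : Tendsto (fun x : ℝ => x ^ (1-p)) atTop (𝓝 0) := by
      have := tendsto_rpow_neg_atTop (y := p - 1) (by linarith)
      simpa [show -(p-1) = 1 - p by ring] using this
    have l3 : Tendsto (fun x : ℝ => x ^ (2-p)) atTop (𝓝 0) := by
      have := tendsto_rpow_neg_atTop (y := p - 2) (by linarith)
      simpa [show -(p-2) = 2 - p by ring] using this
    simp only [hf]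
    exact (((l1.const_mul _).add (l2.const_mul _)).add (l3.const_mul _)).sub tendsto_const_nhds
  have hneg : ∀ᶠ x in atTop, f x < 0 := by
    apply hlim.eventually_lt_const
    linarith
  obtain ⟨t1, hft1, ht01⟩ := (hneg.and (eventually_gt_atTop t0)).exists
  -- intermediate value theorem
  have hicc : Icc t0 t1 ⊆ Ioi 0 := fun x hx => lt_of_lt_of_le ht0pos hx.1
  obtain ⟨T, hTmem, hfT⟩ := intermediate_value_Icc' ht01.le (hfc.mono hicc)
    (⟨hft1.le, hft0.le⟩ : (0:ℝ) ∈ Icc (f t1) (f t0))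
  have hTpos : 0 < T := lt_of_lt_of_le ht0pos hTmem.1
  -- derivative of γ
  have hfun : γ = fun x => a/2*x^3*A + 1/2*x^5*B + b/4*x^6*A^2 - 1/(p+1)*x^(p+4)*D :=
    funext hγ
  have hHas : ∀ t : ℝ, 0 < t → HasDerivAt γ (t ^ (p+3) * f t) t := by
    intro t ht
    rw [hfun]
    have hrp : HasDerivAt (fun x : ℝ => x ^ (p+4)) ((p+4) * t ^ (p+4-1)) t :=
      Real.hasDerivAt_rpow_const (Or.inl (ne_of_gt ht))
    have H := ((((hasDerivAt_pow 3 t).const_mul (a/2)).mul_const A).add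
        (((hasDerivAt_pow 5 t).const_mul (1/2)).mul_const B)).add
        ((((hasDerivAt_pow 6 t).const_mul (b/4)).mul_const (A^2))) |>.sub
        ((hrp.const_mul (1/(p+1))).mul_const D)
    refine H.congr_deriv ?_
    rw [← key t ht]
    rw [show p+4-1 = p+3 by ring]
    push_cast
    ring
  -- γ increasing on (0, T], decreasing on [T, ∞)
  have hmono : StrictMonoOn γ (Ioc 0 T) := by
    apply strictMonoOn_of_deriv_pos (convex_Ioc 0 T)
    · intro x hx; exact (hHas x hx.1).continuousAt.continuousWithinAt
    · intro x hx
      rw [interior_Ioc] at hx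
      rw [(hHas x hx.1).deriv]
      have hfx : 0 < f x := by
        have := hfanti (mem_Ioi.mpr hx.1) (mem_Ioi.mpr hTpos) hx.2
        rw [hfT] at this
        linarith
      exact mul_pos (Real.rpow_pos_of_pos hx.1 _) hfx
  have hanti : StrictAntiOn γ (Ici T) := by
    apply strictAntiOn_of_deriv_neg (convex_Ici T)
    · intro x hx; exact (hHas x (lt_of_lt_of_le hTpos hx)).continuousAt.continuousWithinAt
    · intro x hx
      rw [interior_Ici] at hx
      have hxpos : 0 < x := hTpos.trans hx
      rw [(hHas x hxpos).deriv]
      have hfx : f x < 0 := by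
        have := hfanti (mem_Ioi.mpr hTpos) (mem_Ioi.mpr hxpos) hx
        rw [hfT] at this
        linarith
      exact mul_neg_of_pos_of_neg (Real.rpow_pos_of_pos hxpos _) hfx
  refine ⟨T, hTpos, ?_, ?_, ?_⟩
  · rw [key T hTpos, hfT, mul_zero]
  · intro s hs hgs
    rw [key s hs] at hgs
    have hfs : f s = 0 := by
      rcases mul_eq_zero.mp hgs with h | h
      · exact absurd h (ne_of_gt (Real.rpow_pos_of_pos hs _))
      · exact h
    exact hfanti.injOn (mem_Ioi.mpr hs) (mem_Ioi.mpr hTpos) (hfs.trans hfT.symm)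
  · intro s hs
    rcases le_total s T with h | h
    · exact hmono.monotoneOn ⟨hs, h⟩ ⟨hTpos, le_refl T⟩ h
    · exact hanti.antitoneOn self_mem_Ici (mem_Ici.mpr h) h
end
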